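/- The set K₊ is closed in ℝ. -/
import Mathlib


noncomputable section

/-- The affine contraction of ratio 1/100 fixing 0. -/
def T0 (x : ℝ) : ℝ := x / 100

/-- The affine contraction of ratio 1/100 fixing 1. -/
def T1 (x : ℝ) : ℝ := 1 + (x - 1) / 100

/-- The affine contraction of ratio 1/100 fixing -1. -/
def Tm1 (x : ℝ) : ℝ := -1 + (x + 1) / 100

/-- The inverse of `T0`. -/
def T0inv (x : ℝ) : ℝ := 100 * x

/-- The `i`-th iterate of `T0` for `i ≥ 0`, and the `|i|`-th iterate of
`T0⁻¹ : x ↦ 100 x` for `i < 0`. -/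
def T0z : ℤ → ℝ → ℝ
  | Int.ofNat n => T0^[n]
  | Int.negSucc n => T0inv^[n + 1]

/-- The set `K₊ = {0} ∪ ⋃ i ∈ ℤ, T₀^[i] '' (C₁ ∪ C₋₁)` where `C₁ = T₁ '' C`,
`C₋₁ = T₋₁ '' C`. -/
def Kplus (C : Set ℝ) : Set ℝ := {0} ∪ ⋃ i : ℤ, T0z i '' (T1 '' C ∪ Tm1 '' C)

lemma T0_iter (n : ℕ) (x : ℝ) : T0^[n] x = x / 100 ^ n := by
  induction n with
  | zero => simp
  | succ n ih => rw [Function.iterate_succ_apply', ih, T0, div_div, pow_succ]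

lemma T0inv_iter (n : ℕ) (x : ℝ) : T0inv^[n] x = 100 ^ n * x := by
  induction n with
  | zero => simp
  | succ n ih => rw [Function.iterate_succ_apply', ih, T0inv]; ring

lemma T0z_eq (i : ℤ) (x : ℝ) : T0z i x = (100 : ℝ) ^ (-i) * x := by
  cases i with
  | ofNat n =>
    show T0^[n] x = _
    rw [T0_iter, zpow_neg]
    norm_num [zpow_natCast]
    rw [div_eq_inv_mul]
  | negSucc n =>
    show T0inv^[n + 1] x = _
    rw [T0inv_iter, Int.negSucc_eq, neg_neg]
    norm_cast

lemma T0z_fun (i : ℤ) : T0z i = fun x : ℝ => (100 : ℝ) ^ (-i) * x := funext (T0z_eq i)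

-- bound on C
lemma C_bound (C : Set ℝ) (hne : C.Nonempty) (hcomp : IsCompact C)
    (hself : C = Tm1 '' C ∪ T0 '' C ∪ T1 '' C) :
    ∀ x ∈ C, |x| ≤ 101 / 99 := by
  obtain ⟨x₀, hx₀C, hmax'⟩ := hcomp.exists_isMaxOn hne continuous_abs.continuousOn
  have hmax : ∀ y ∈ C, |y| ≤ |x₀| := fun y hy => hmax' hy
  intro x hx
  refine le_trans (hmax x hx) ?_
  have hx₀C' := hx₀C
  rw [hself] at hx₀C'
  rcases hx₀C' with (⟨y, hy, rfl⟩ | ⟨y, hy, rfl⟩) | ⟨y, hy, rfl⟩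
  · have h := hmax _ hy
    have : |Tm1 y| ≤ 1 + (|y| + 1) / 100 := by
      rw [Tm1]
      calc |-1 + (y + 1) / 100| ≤ |(-1 : ℝ)| + |(y + 1) / 100| := abs_add_le _ _
        _ ≤ 1 + (|y| + 1) / 100 := by
            rw [abs_neg, abs_one, abs_div]
            gcongr
            · exact le_trans (abs_add_le _ _) (by simp)
            · simp [abs_of_pos]
    nlinarith [abs_nonneg (Tm1 y)]
  · have h := hmax _ hy
    have : |T0 y| = |y| / 100 := by rw [T0, abs_div]; norm_num
    nlinarith [abs_nonneg (T0 y)]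
  · have h := hmax _ hy
    have : |T1 y| ≤ 1 + (|y| + 1) / 100 := by
      rw [T1]
      calc |1 + (y - 1) / 100| ≤ |(1 : ℝ)| + |(y - 1) / 100| := abs_add_le _ _
        _ ≤ 1 + (|y| + 1) / 100 := by
            rw [abs_one, abs_div]
            gcongr
            · exact le_trans (abs_sub _ _) (by simp)
            · simp [abs_of_pos]
    nlinarith [abs_nonneg (T1 y)]

theorem stmt_5 (C : Set ℝ) (hne : C.Nonempty) (hcomp : IsCompact C)
    (hself : C = Tm1 '' C ∪ T0 '' C ∪ T1 '' C) :
    IsClosed (Kplus C) := by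
  have hCb := C_bound C hne hcomp hself
  set D : Set ℝ := T1 '' C ∪ Tm1 '' C with hD
  have hDcomp : IsCompact D := by
    refine (hcomp.image ?_).union (hcomp.image ?_)
    · unfold T1; fun_prop
    · unfold Tm1; fun_prop
  have hDb : ∀ y ∈ D, 97 / 99 ≤ |y| ∧ |y| ≤ 101 / 99 := by
    rintro y (⟨z, hz, rfl⟩ | ⟨z, hz, rfl⟩)
    · have hz' := hCb z hz
      have h1 : |z - 1| ≤ 101 / 99 + 1 := le_trans (abs_sub _ _) (by rw [abs_one]; linarith)
      have h2 : |T1 z| ≤ 1 + |z - 1| / 100 := by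
        rw [T1]
        refine le_trans (abs_add_le _ _) ?_
        rw [abs_one, abs_div]
        simp [abs_of_pos]
      have h3 : 1 - |z - 1| / 100 ≤ |T1 z| := by
        have ha := le_abs_self (T1 z)
        have hc : 1 - |z - 1| / 100 ≤ T1 z := by
          rw [T1]; linarith [neg_abs_le (z - 1)]
        linarith
      constructor <;> nlinarith
    · have hz' := hCb z hz
      have h1 : |z + 1| ≤ 101 / 99 + 1 := le_trans (abs_add_le _ _) (by rw [abs_one]; linarith)
      have h2 : |Tm1 z| ≤ 1 + |z + 1| / 100 := by
        rw [Tm1]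
        refine le_trans (abs_add_le _ _) ?_
        rw [abs_neg, abs_one, abs_div]
        simp [abs_of_pos]
      have h3 : 1 - |z + 1| / 100 ≤ |Tm1 z| := by
        have ha := neg_abs_le (Tm1 z)
        have hc : Tm1 z ≤ -1 + |z + 1| / 100 := by
          rw [Tm1]; linarith [le_abs_self (z + 1)]
        linarith
      constructor <;> nlinarith
  -- main argument
  rw [← closure_subset_iff_isClosed]
  intro L hL
  by_cases hL0 : L = 0
  · left; exact hL0
  have hLpos : 0 < |L| := abs_pos.mpr hL0
  set a : ℝ := 97 / 99
  set b : ℝ := 101 / 99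
  set m : ℤ := ⌈Real.logb 100 (2 * a / (3 * |L|))⌉
  set M : ℤ := ⌊Real.logb 100 (2 * b / |L|)⌋
  set F : Set ℝ := ⋃ i ∈ Finset.Icc m M, T0z i '' D with hF
  have hFclosed : IsClosed F := by
    refine isClosed_biUnion_finset (fun i _ => ?_)
    rw [T0z_fun]
    exact (hDcomp.image (by fun_prop)).isClosed
  have hsub : Kplus C ∩ Metric.ball L (|L| / 2) ⊆ F := by
    rintro x ⟨hxK, hxball⟩
    rw [Metric.mem_ball, Real.dist_eq] at hxball
    have hxlow : |L| / 2 < |x| := by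
      have := abs_sub_abs_le_abs_sub L x
      rw [abs_sub_comm] at this
      linarith
    have hxhigh : |x| < 3 * |L| / 2 := by
      have := abs_sub_abs_le_abs_sub x L
      linarith
    rcases hxK with hx0 | hx
    · simp at hx0; rw [hx0] at hxlow; simp at hxlow; linarith
    rw [Set.mem_iUnion] at hx
    obtain ⟨i, y, hy, hxy⟩ := hx
    rw [T0z_eq] at hxy
    obtain ⟨hya, hyb⟩ := hDb y hy
    have hxabs : |x| = (100 : ℝ) ^ (-i) * |y| := by
      rw [← hxy, abs_mul, abs_of_pos (zpow_pos (by norm_num) _)]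
    have hb1 : (1 : ℝ) < 100 := by norm_num
    have hzpow_pos : (0 : ℝ) < (100 : ℝ) ^ (-i) := zpow_pos (by norm_num) _
    have hzi_pos : (0 : ℝ) < (100 : ℝ) ^ i := zpow_pos (by norm_num) _
    have hy0 : 0 < |y| := lt_of_lt_of_le (by norm_num) hya
    rw [zpow_neg] at hxabs
    have hyx : |y| = 100 ^ i * |x| := by
      rw [hxabs, ← mul_assoc, mul_inv_cancel₀ (ne_of_gt hzi_pos), one_mul]
    have hub : (100 : ℝ) ^ i * |L| ≤ 2 * b := by
      nlinarith [mul_lt_mul_of_pos_left hxlow hzi_pos]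
    have hlb : 2 * a ≤ (100 : ℝ) ^ i * (3 * |L|) := by
      nlinarith [mul_lt_mul_of_pos_left hxhigh hzi_pos]
    have hiM : i ≤ M := by
      have h1 : (100 : ℝ) ^ i ≤ 2 * b / |L| := by
        rw [le_div_iff₀ hLpos]; linarith
      have : (i : ℝ) ≤ Real.logb 100 (2 * b / |L|) := by
        rw [Real.le_logb_iff_rpow_le hb1 (by positivity), Real.rpow_intCast]
        exact h1
      exact Int.le_floor.mpr this
    have him : m ≤ i := by
      have h1 : 2 * a / (3 * |L|) ≤ (100 : ℝ) ^ i := by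
        rw [div_le_iff₀ (by positivity : (0:ℝ) < 3 * |L|)]; linarith
      have : Real.logb 100 (2 * a / (3 * |L|)) ≤ (i : ℝ) := by
        rw [Real.logb_le_iff_le_rpow hb1 (by positivity), Real.rpow_intCast]
        exact h1
      exact Int.ceil_le.mpr this
    rw [hF, Set.mem_iUnion₂]
    exact ⟨i, Finset.mem_Icc.mpr ⟨him, hiM⟩, y, hy, by rw [T0z_eq]; exact hxy⟩
  have hLF : L ∈ closure F := by
    refine closure_mono hsub ?_
    rw [mem_closure_iff] at hL ⊢
    intro U hU hLU
    obtain ⟨x, hxU, hxK⟩ := hL (U ∩ Metric.ball L (|L| / 2))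
      (hU.inter Metric.isOpen_ball) ⟨hLU, Metric.mem_ball_self (by positivity)⟩
    exact ⟨x, hxU.1, hxK, hxU.2⟩
  have hLF' : L ∈ F := hFclosed.closure_subset hLF
  rw [hF, Set.mem_iUnion₂] at hLF'
  obtain ⟨i, _, hLi⟩ := hLF'
  exact Or.inr (Set.mem_iUnion.mpr ⟨i, hLi⟩)
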